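/- Let G be a finite group and χ a complex irreducible character of G. Define τ_χ(b) = Σ_{a∈G} |C_G(ab)b ∩ C_G(a)| · χ([a,b]). Then τ_χ is a class function on G and for every b ∈ G, τ_χ(b⁻¹) = conj(τ_χ(b)) = τ_{conj(χ)}(b), where conj(χ) is the complex conjugate character. -/

import Mathlib

/-- `|C_G(ab)b ∩ C_G(a)|`, where `C_G(x)` is the centralizer of `x`. -/
noncomputable def centInt {G : Type} [Group G] (a b : G) : ℕ :=
  Nat.card {x : G | x * b⁻¹ ∈ Subgroup.centralizer ({a * b} : Set G) ∧
    x ∈ Subgroup.centralizer ({a} : Set G)}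

/-- `τ_χ(b) = ∑_{a ∈ G} |C_G(ab)b ∩ C_G(a)| • χ([a,b])`, with `[a,b] = a⁻¹b⁻¹ab`. -/
noncomputable def tau {G : Type} [Group G] [Fintype G] (χ : G → ℂ) (b : G) : ℂ :=
  ∑ a : G, (centInt a b : ℂ) * χ (a⁻¹ * b⁻¹ * a * b)


open Polynomial Matrix

section Analytic

variable {ι : Type} [Fintype ι] [DecidableEq ι]

private lemma aux_root_pow_eq_one {M : Matrix ι ι ℂ} {k : ℕ} (hMk : M ^ k = 1)
    {l : ℂ} (hl : l ∈ M.charpoly.roots) : l ^ k = 1 := by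
  have hroot : M.charpoly.IsRoot l := (Polynomial.mem_roots'.mp hl).2
  have hdet0 : (l • 1 - M).det = 0 := by
    have h1 : Polynomial.eval l M.charpoly = 0 := hroot
    rw [Matrix.charpoly, _root_.eval_det, Matrix.matPolyEquiv_charmatrix] at h1
    rw [smul_eq_diagonal_mul, mul_one]
    simpa using h1
  obtain ⟨v, hv0, hv⟩ := (Matrix.exists_mulVec_eq_zero_iff (M := l • 1 - M)).mpr hdet0
  have hMv : M *ᵥ v = l • v := by
    have := hv
    rw [Matrix.sub_mulVec, sub_eq_zero] at this
    rw [← this, Matrix.smul_mulVec, Matrix.one_mulVec]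
  have hpow : ∀ j : ℕ, (M ^ j) *ᵥ v = l ^ j • v := by
    intro j
    induction j with
    | zero => simp
    | succ j ih =>
      rw [pow_succ, ← Matrix.mulVec_mulVec, hMv, Matrix.mulVec_smul, ih, smul_smul, pow_succ,
        mul_comm]
  have hk := hpow k
  rw [hMk, Matrix.one_mulVec] at hk
  have : (l ^ k - 1) • v = 0 := by rw [sub_smul, one_smul, ← hk, sub_self]
  rcases smul_eq_zero.mp this with h | h
  · exact sub_eq_zero.mp h
  · exact absurd h hv0

private lemma aux_reverse_multiset_prod {R : Type*} [CommRing R] [NoZeroDivisors R]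
    (s : Multiset R[X]) : s.prod.reverse = (s.map Polynomial.reverse).prod := by
  induction s using Multiset.induction with
  | empty => simp [Polynomial.reverse]
  | cons a s ih => simp [Polynomial.reverse_mul_of_domain, ih]

private lemma aux_reverse_X_sub_C {R : Type*} [CommRing R] [Nontrivial R] (a : R) :
    (X - C a).reverse = 1 - C a * X := by
  rw [Polynomial.reverse, natDegree_X_sub_C, reflect_sub, reflect_one_X, reflect_C, pow_one]

private lemma aux_charpoly_inv (M : Matrix ι ι ℂ) (h : IsUnit M.det) :
    (M⁻¹).charpoly = (M.charpoly.roots.map fun a => X - C a⁻¹).prod := by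
  classical
  set R := M.charpoly.roots with hR
  set n := Fintype.card ι
  have hdne : M.det ≠ 0 := h.ne_zero
  have hsp : M.charpoly.Splits := IsAlgClosed.splits M.charpoly
  have hcard : R.card = M.charpoly.natDegree := (Polynomial.splits_iff_card_roots).mp hsp
  have hfact : (R.map fun a => X - C a).prod = M.charpoly :=
    prod_multiset_X_sub_C_of_monic_of_roots_card_eq M.charpoly_monic hcard
  have hdetR : M.det = R.prod := M.det_eq_prod_roots_charpoly
  have hcardn : R.card = n := by rw [hcard, M.charpoly_natDegree_eq_dim]
  have key : (M⁻¹).charpoly * C M.det = (R.map fun a => X - C a⁻¹).prod * C M.det := by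
    have hCdet : (C M.det : ℂ[X]) = (M.map C).det := by
      rw [RingHom.map_det, RingHom.mapMatrix_apply]
    have hL : (M⁻¹).charpoly * C M.det = ((X : ℂ[X]) • M.map C - 1).det := by
      rw [Matrix.charpoly, hCdet, ← Matrix.det_mul]
      congr 1
      rw [charmatrix, sub_mul, RingHom.mapMatrix_apply, ← Matrix.map_mul,
        Matrix.nonsing_inv_mul M h, Matrix.map_one C (map_zero C) (map_one C), scalar_apply,
        ← smul_eq_diagonal_mul]
    have hRev : ((X : ℂ[X]) • M.map C - 1).det = (-1) ^ n * M.charpoly.reverse := by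
      rw [M.reverse_charpoly, charpolyRev, ← Matrix.det_neg, neg_sub]
    have h0 : ∀ a ∈ R, a ≠ 0 := by
      intro a ha ha0
      exact hdne (by rw [hdetR]; exact Multiset.prod_eq_zero (ha0 ▸ ha))
    have hrev : M.charpoly.reverse
        = ((-1 : ℂ[X]) ^ n * C R.prod) * (R.map fun a => X - C a⁻¹).prod := by
      rw [← hfact, aux_reverse_multiset_prod, Multiset.map_map]
      have : (R.map fun a => ((X - C a).reverse)) =
          R.map fun a => (-1 * C a) * (X - C a⁻¹) := by
        apply Multiset.map_congr rfl
        intro a ha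
        rw [aux_reverse_X_sub_C]
        have hinv : C a * C a⁻¹ = (1 : ℂ[X]) := by
          rw [← C_mul, mul_inv_cancel₀ (h0 a ha), C_1]
        rw [show (-1 : ℂ[X]) * C a * (X - C a⁻¹) = C a * C a⁻¹ - C a * X by ring, hinv]
      rw [Function.comp_def, this]
      rw [show (fun a => (-1 * C a) * (X - C a⁻¹)) = fun a : ℂ =>
        ((-1 : ℂ[X]) * C a) * ((fun a => X - C a⁻¹) a) from rfl, Multiset.prod_map_mul,
        Multiset.prod_map_mul]
      simp only [Multiset.map_const', Multiset.prod_replicate, hcardn]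
      rw [map_multiset_prod (C : ℂ →+* ℂ[X])]
    rw [hL, hRev, hrev, hdetR]
    rw [show ((-1 : ℂ[X]) ^ n) * ((-1) ^ n * C R.prod * (R.map fun a => X - C a⁻¹).prod)
      = (((-1 : ℂ[X]) ^ n) * ((-1) ^ n)) * (C R.prod * (R.map fun a => X - C a⁻¹).prod) by ring,
      ← pow_add, Even.neg_one_pow ⟨n, rfl⟩, one_mul]
    ring
  have hC : (C M.det : ℂ[X]) ≠ 0 := by simpa using hdne
  exact mul_right_cancel₀ hC key

private lemma aux_trace_right_inv_eq_conj (M N : Matrix ι ι ℂ) {k : ℕ} (hk : k ≠ 0)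
    (hMk : M ^ k = 1) (hMN : M * N = 1) : N.trace = (starRingEnd ℂ) M.trace := by
  have hdet : IsUnit M.det := by
    apply IsUnit.of_mul_eq_one N.det
    rw [← Matrix.det_mul, hMN, Matrix.det_one]
  have hNeq : N = M⁻¹ := (Matrix.inv_eq_right_inv hMN).symm
  have hroots : (M⁻¹).charpoly.roots = M.charpoly.roots.map (fun a => a⁻¹) := by
    rw [aux_charpoly_inv M hdet, show Multiset.map (fun a => X - C a⁻¹) M.charpoly.roots
      = Multiset.map (fun a => X - C a) (M.charpoly.roots.map fun a => a⁻¹) by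
        rw [Multiset.map_map]; rfl,
      Polynomial.roots_multiset_prod_X_sub_C]
  have hconj : ∀ l ∈ M.charpoly.roots, (starRingEnd ℂ) l = l⁻¹ := by
    intro l hl
    have hlk := aux_root_pow_eq_one hMk hl
    have habs : ‖l‖₊ ^ k = 1 := by
      rw [← nnnorm_pow, hlk, nnnorm_one]
    have habs1 : ‖l‖₊ = 1 := (pow_eq_one_iff_of_nonneg zero_le hk).mp habs
    have hns : Complex.normSq l = 1 := by
      have : ‖l‖ = 1 := by rw [← coe_nnnorm, habs1]; rfl
      rw [Complex.normSq_eq_norm_sq, this, one_pow]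
    have hml : l * (starRingEnd ℂ) l = 1 := by
      rw [Complex.mul_conj, hns, Complex.ofReal_one]
    exact eq_inv_of_mul_eq_one_right hml
  calc N.trace = (M⁻¹).trace := by rw [hNeq]
    _ = (M⁻¹).charpoly.roots.sum := (M⁻¹).trace_eq_sum_roots_charpoly
    _ = (M.charpoly.roots.map (fun a => a⁻¹)).sum := by rw [hroots]
    _ = (M.charpoly.roots.map (starRingEnd ℂ)).sum := by
        congr 1
        exact (Multiset.map_congr rfl hconj).symm
    _ = (starRingEnd ℂ) M.charpoly.roots.sum := (map_multiset_sum _ _).symm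
    _ = (starRingEnd ℂ) M.trace := by rw [← M.trace_eq_sum_roots_charpoly]

end Analytic

private lemma aux_char_inv {G : Type} [Group G] [Fintype G] (V : FDRep ℂ G) (g : G) :
    V.character g⁻¹ = (starRingEnd ℂ) (V.character g) := by
  classical
  let b := Module.finBasis ℂ V
  set M := LinearMap.toMatrix b b (V.ρ g) with hM
  set N := LinearMap.toMatrix b b (V.ρ g⁻¹) with hN
  have hMN : M * N = 1 := by
    rw [hM, hN, ← LinearMap.toMatrix_mul, ← _root_.map_mul, mul_inv_cancel, _root_.map_one,
      LinearMap.toMatrix_one]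
  have hMk : M ^ orderOf g = 1 := by
    rw [hM, LinearMap.toMatrix_pow, ← _root_.map_pow, pow_orderOf_eq_one, _root_.map_one,
      LinearMap.toMatrix_one]
  have h := aux_trace_right_inv_eq_conj M N (orderOf_pos g).ne' hMk hMN
  show LinearMap.trace ℂ V (V.ρ g⁻¹) = (starRingEnd ℂ) (LinearMap.trace ℂ V (V.ρ g))
  rw [LinearMap.trace_eq_matrix_trace ℂ b, LinearMap.trace_eq_matrix_trace ℂ b]
  exact h

private lemma aux_char_conj {G : Type} [Group G] [Fintype G] (V : FDRep ℂ G) (g w : G) :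
    V.character (w⁻¹ * g * w) = V.character g := by
  have := FDRep.char_conj V g w⁻¹
  rwa [inv_inv] at this

section Combinatorial

variable {G : Type} [Group G]

private lemma aux_mem_cent_singleton {s y : G} :
    y ∈ Subgroup.centralizer ({s} : Set G) ↔ s * y = y * s := by
  rw [Subgroup.mem_centralizer_iff]
  simp

private lemma aux_cent_conj_iff (s y w : G) :
    y ∈ Subgroup.centralizer ({s} : Set G) ↔
      w⁻¹ * y * w ∈ Subgroup.centralizer ({w⁻¹ * s * w} : Set G) := by
  rw [aux_mem_cent_singleton, aux_mem_cent_singleton,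
    show (w⁻¹ * s * w) * (w⁻¹ * y * w) = w⁻¹ * (s * y) * w by group,
    show (w⁻¹ * y * w) * (w⁻¹ * s * w) = w⁻¹ * (y * s) * w by group,
    mul_right_cancel_iff, mul_left_cancel_iff]

private lemma aux_centInt_conj (a b w : G) :
    centInt (w⁻¹ * a * w) (w⁻¹ * b * w) = centInt a b := by
  unfold centInt
  symm
  apply Nat.card_congr
  refine Equiv.subtypeEquiv ((Equiv.mulLeft w⁻¹).trans (Equiv.mulRight w)) ?_
  intro y
  simp only [Set.mem_setOf_eq, Equiv.trans_apply, Equiv.coe_mulLeft, Equiv.coe_mulRight]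
  have h1 : y * b⁻¹ ∈ Subgroup.centralizer ({a * b} : Set G) ↔
      (w⁻¹ * y * w) * (w⁻¹ * b * w)⁻¹ ∈
        Subgroup.centralizer ({(w⁻¹ * a * w) * (w⁻¹ * b * w)} : Set G) := by
    rw [show (w⁻¹ * y * w) * (w⁻¹ * b * w)⁻¹ = w⁻¹ * (y * b⁻¹) * w by group,
      show (w⁻¹ * a * w) * (w⁻¹ * b * w) = w⁻¹ * (a * b) * w by group]
    exact aux_cent_conj_iff (a * b) (y * b⁻¹) w
  have h2 : y ∈ Subgroup.centralizer ({a} : Set G) ↔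
      w⁻¹ * y * w ∈ Subgroup.centralizer ({w⁻¹ * a * w} : Set G) :=
    aux_cent_conj_iff a y w
  exact and_congr h1 h2

private lemma aux_centInt_mul (a b : G) : centInt (a * b) b⁻¹ = centInt a b := by
  unfold centInt
  symm
  apply Nat.card_congr
  refine Equiv.subtypeEquiv (Equiv.mulRight b⁻¹) ?_
  intro y
  simp only [Set.mem_setOf_eq, Equiv.coe_mulRight, inv_inv]
  rw [show a * b * b⁻¹ = a by group, show y * b⁻¹ * b = y by group]
  tauto

end Combinatorial

theorem stmt6 {G : Type} [Group G] [Fintype G]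
    (V : FDRep ℂ G) (hV : CategoryTheory.Simple V) :
    (∀ b w : G, tau V.character (w⁻¹ * b * w) = tau V.character b) ∧
    (∀ b : G,
      tau V.character b⁻¹ = (starRingEnd ℂ) (tau V.character b) ∧
      tau V.character b⁻¹ = tau (fun x => (starRingEnd ℂ) (V.character x)) b) := by
  constructor
  · intro b w
    unfold tau
    symm
    apply Fintype.sum_equiv ((Equiv.mulLeft w⁻¹).trans (Equiv.mulRight w))
    intro a
    simp only [Equiv.trans_apply, Equiv.coe_mulLeft, Equiv.coe_mulRight]
    rw [← aux_centInt_conj a b w]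
    congr 1
    rw [show (w⁻¹ * a * w)⁻¹ * (w⁻¹ * b * w)⁻¹ * (w⁻¹ * a * w) * (w⁻¹ * b * w)
      = w⁻¹ * (a⁻¹ * b⁻¹ * a * b) * w by group, aux_char_conj]
  · intro b
    have hbinv : tau V.character b⁻¹
        = ∑ a : G, (centInt a b : ℂ) * V.character (b⁻¹ * a⁻¹ * b * a) := by
      unfold tau
      apply Fintype.sum_equiv (Equiv.mulRight b⁻¹)
      intro x
      simp only [Equiv.coe_mulRight]
      have hc : ((centInt x b⁻¹ : ℕ) : ℂ) = ((centInt (x * b⁻¹) b : ℕ) : ℂ) := by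
        rw [← aux_centInt_mul (x * b⁻¹) b, inv_mul_cancel_right]
      rw [hc, show x⁻¹ * (b⁻¹)⁻¹ * x * b⁻¹ = b⁻¹ * (x * b⁻¹)⁻¹ * b * (x * b⁻¹) by group]
    have hconjtau : (starRingEnd ℂ) (tau V.character b)
        = ∑ a : G, (centInt a b : ℂ) * V.character (b⁻¹ * a⁻¹ * b * a) := by
      unfold tau
      rw [map_sum]
      apply Finset.sum_congr rfl
      intro a _
      rw [_root_.map_mul, map_natCast, ← aux_char_inv,
        show (a⁻¹ * b⁻¹ * a * b)⁻¹ = b⁻¹ * a⁻¹ * b * a by group]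
    refine ⟨by rw [hbinv, hconjtau], ?_⟩
    rw [hbinv]
    unfold tau
    apply Finset.sum_congr rfl
    intro a _
    simp only []
    rw [← aux_char_inv, show (a⁻¹ * b⁻¹ * a * b)⁻¹ = b⁻¹ * a⁻¹ * b * a by group]
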